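/- For any two probability measures μ, ν on ℝ with finite first moments and distribution functions F_μ, F_ν, the Wasserstein-1 distance satisfies W₁(μ, ν) = ∫_{-∞}^∞ |F_μ(x) - F_ν(x)| dx. -/

import Mathlib

open MeasureTheory ProbabilityTheory

/-- The Wasserstein-1 distance between two probability measures on `ℝ`,
defined as the infimum of `∫ |x - y| dπ` over all couplings `π`. -/
noncomputable def W1 (μ ν : Measure ℝ) : ℝ :=
  sInf { r : ℝ | ∃ π : Measure (ℝ × ℝ), IsProbabilityMeasure π ∧
    π.map Prod.fst = μ ∧ π.map Prod.snd = ν ∧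
    r = ∫ p : ℝ × ℝ, |p.1 - p.2| ∂π }

section Aux
open Set Filter
open scoped ENNReal

namespace W1Aux

/-- pointwise identity: `∫⁻ t, 1_{Ico (min x y) (max x y)}(t) dt = |x - y|`. -/
lemma lintegral_ind_eq_abs (x y : ℝ) :
    ∫⁻ t, (Set.Ico (min x y) (max x y)).indicator (1 : ℝ → ℝ≥0∞) t = ENNReal.ofReal |x - y| := by
  rw [lintegral_indicator_one measurableSet_Ico, Real.volume_Ico, max_sub_min_eq_abs,
    abs_sub_comm]

lemma mem_Ico_min_max {x y t : ℝ} :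
    t ∈ Set.Ico (min x y) (max x y) ↔ ((x ≤ t ∧ ¬ y ≤ t) ∨ (y ≤ t ∧ ¬ x ≤ t)) := by
  simp only [Set.mem_Ico, min_le_iff, lt_max_iff]
  simp only [lt_iff_not_ge]
  tauto

/-- The key Fubini swap. -/
lemma key_swap {β : Type*} [MeasurableSpace β] (P : Measure β) [SFinite P]
    (f g : β → ℝ) (hf : Measurable f) (hg : Measurable g) :
    ∫⁻ u, ENNReal.ofReal |f u - g u| ∂P
      = ∫⁻ t, P {u | (f u ≤ t ∧ ¬ g u ≤ t) ∨ (g u ≤ t ∧ ¬ f u ≤ t)} := by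
  have hS : MeasurableSet {q : β × ℝ | min (f q.1) (g q.1) ≤ q.2 ∧ q.2 < max (f q.1) (g q.1)} := by
    apply MeasurableSet.inter
    · exact measurableSet_le (((hf.comp measurable_fst).min (hg.comp measurable_fst))) measurable_snd
    · exact measurableSet_lt measurable_snd ((hf.comp measurable_fst).max (hg.comp measurable_fst))
  have hk : Measurable ({q : β × ℝ | min (f q.1) (g q.1) ≤ q.2 ∧ q.2 < max (f q.1) (g q.1)}.indicator
      (1 : β × ℝ → ℝ≥0∞)) := measurable_const.indicator hS
  calc ∫⁻ u, ENNReal.ofReal |f u - g u| ∂P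
      = ∫⁻ u, ∫⁻ t, {q : β × ℝ | min (f q.1) (g q.1) ≤ q.2 ∧ q.2 < max (f q.1) (g q.1)}.indicator
          (1 : β × ℝ → ℝ≥0∞) (u, t) ∂volume ∂P := by
        refine lintegral_congr fun u => ?_
        rw [← lintegral_ind_eq_abs (f u) (g u)]
        refine lintegral_congr fun t => ?_
        simp [Set.indicator_apply, Set.mem_Ico]
    _ = ∫⁻ t, ∫⁻ u, {q : β × ℝ | min (f q.1) (g q.1) ≤ q.2 ∧ q.2 < max (f q.1) (g q.1)}.indicator
          (1 : β × ℝ → ℝ≥0∞) (u, t) ∂P ∂volume := by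
        exact lintegral_lintegral_swap hk.aemeasurable
    _ = ∫⁻ t, P {u | (f u ≤ t ∧ ¬ g u ≤ t) ∨ (g u ≤ t ∧ ¬ f u ≤ t)} := by
        refine lintegral_congr fun t => ?_
        have hsec : MeasurableSet {u | min (f u) (g u) ≤ t ∧ t < max (f u) (g u)} := by
          apply MeasurableSet.inter
          · exact measurableSet_le (hf.min hg) measurable_const
          · exact measurableSet_lt measurable_const (hf.max hg)
        have : ∫⁻ u, {q : β × ℝ | min (f q.1) (g q.1) ≤ q.2 ∧ q.2 < max (f q.1) (g q.1)}.indicator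
            (1 : β × ℝ → ℝ≥0∞) (u, t) ∂P
            = ∫⁻ u, {u | min (f u) (g u) ≤ t ∧ t < max (f u) (g u)}.indicator
            (1 : β → ℝ≥0∞) u ∂P := by
          refine lintegral_congr fun u => ?_
          simp [Set.indicator_apply]
        rw [this, lintegral_indicator_one hsec]
        congr 1
        ext u
        simpa [Set.mem_Ico] using (mem_Ico_min_max (x := f u) (y := g u) (t := t))

/-- `|π A - π B| ≤ π (A Δ B)` for finite measures. -/
lemma abs_measure_le {α : Type*} [MeasurableSpace α] (π : Measure α) [IsFiniteMeasure π]
    (A B : Set α) :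
    ENNReal.ofReal |(π A).toReal - (π B).toReal| ≤ π ((A \ B) ∪ (B \ A)) := by
  apply ENNReal.ofReal_le_of_le_toReal
  rw [abs_sub_le_iff]
  constructor
  · have h1 : π A ≤ π B + π ((A \ B) ∪ (B \ A)) := by
      calc π A ≤ π (B ∪ (A \ B)) := measure_mono (by intro x hx; by_cases h : x ∈ B <;> simp [h, hx])
        _ ≤ π B + π (A \ B) := measure_union_le _ _
        _ ≤ π B + π ((A \ B) ∪ (B \ A)) := by gcongr; exact Set.subset_union_left
    have := ENNReal.toReal_mono (by finiteness) h1
    rw [ENNReal.toReal_add (by finiteness) (by finiteness)] at this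
    linarith
  · have h1 : π B ≤ π A + π ((A \ B) ∪ (B \ A)) := by
      calc π B ≤ π (A ∪ (B \ A)) := measure_mono (by intro x hx; by_cases h : x ∈ A <;> simp [h, hx])
        _ ≤ π A + π (B \ A) := measure_union_le _ _
        _ ≤ π A + π ((A \ B) ∪ (B \ A)) := by gcongr; exact Set.subset_union_right
    have := ENNReal.toReal_mono (by finiteness) h1
    rw [ENNReal.toReal_add (by finiteness) (by finiteness)] at this
    linarith

/-- lower bound: for any coupling, `∫⁻ |F_μ - F_ν| ≤ ∫⁻ |x - y| dπ`. -/
lemma coupling_lb (μ ν : Measure ℝ) [IsProbabilityMeasure μ] [IsProbabilityMeasure ν]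
    (π : Measure (ℝ × ℝ)) [IsProbabilityMeasure π]
    (h1 : π.map Prod.fst = μ) (h2 : π.map Prod.snd = ν) :
    ∫⁻ t, ENNReal.ofReal |cdf μ t - cdf ν t| ≤ ∫⁻ p : ℝ × ℝ, ENNReal.ofReal |p.1 - p.2| ∂π := by
  rw [key_swap π Prod.fst Prod.snd measurable_fst measurable_snd]
  refine lintegral_mono fun t => ?_
  have hA : cdf μ t = (π {p : ℝ × ℝ | p.1 ≤ t}).toReal := by
    rw [cdf_eq_real, measureReal_def, ← h1, Measure.map_apply measurable_fst measurableSet_Iic]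
    rfl
  have hB : cdf ν t = (π {p : ℝ × ℝ | p.2 ≤ t}).toReal := by
    rw [cdf_eq_real, measureReal_def, ← h2, Measure.map_apply measurable_snd measurableSet_Iic]
    rfl
  rw [hA, hB]
  refine (abs_measure_le π _ _).trans_eq ?_
  congr 1

/-- the cost is integrable under any coupling, given finite first moments of the marginals. -/
lemma coupling_integrable (μ ν : Measure ℝ) [IsProbabilityMeasure μ] [IsProbabilityMeasure ν]
    (hμ : Integrable (fun x => |x|) μ) (hν : Integrable (fun x => |x|) ν)
    (π : Measure (ℝ × ℝ)) [IsProbabilityMeasure π]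
    (h1 : π.map Prod.fst = μ) (h2 : π.map Prod.snd = ν) :
    Integrable (fun p : ℝ × ℝ => |p.1 - p.2|) π := by
  have hf : Integrable (fun p : ℝ × ℝ => |p.1|) π := by
    rw [← h1] at hμ
    exact (integrable_map_measure (continuous_abs.aestronglyMeasurable)
      measurable_fst.aemeasurable).mp hμ
  have hg : Integrable (fun p : ℝ × ℝ => |p.2|) π := by
    rw [← h2] at hν
    exact (integrable_map_measure (continuous_abs.aestronglyMeasurable)
      measurable_snd.aemeasurable).mp hν
  refine (hf.add hg).mono' ((continuous_fst.sub continuous_snd).abs.aestronglyMeasurable) ?_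
  filter_upwards with p
  rw [Real.norm_eq_abs, abs_abs]
  exact (abs_sub _ _).trans (le_refl _)

noncomputable def Q (μ : Measure ℝ) (u : ℝ) : ℝ := sInf {x | u ≤ cdf μ x}

lemma Q_nonempty (μ : Measure ℝ) {u : ℝ} (hu : u < 1) : {x | u ≤ cdf μ x}.Nonempty := by
  have h := (tendsto_cdf_atTop μ).eventually_const_le hu
  exact h.exists

lemma Q_bddBelow (μ : Measure ℝ) {u : ℝ} (hu : 0 < u) : BddBelow {x | u ≤ cdf μ x} := by
  have h := (tendsto_cdf_atBot μ).eventually_lt_const hu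
  obtain ⟨y, hy⟩ := h.exists
  refine ⟨y, fun z hz => ?_⟩
  by_contra hzy
  push_neg at hzy
  exact absurd (hz.trans (monotone_cdf μ hzy.le)) (not_le.mpr hy)

lemma Q_le_iff (μ : Measure ℝ) {u x : ℝ} (hu : u ∈ Set.Ioo (0:ℝ) 1) :
    Q μ u ≤ x ↔ u ≤ cdf μ x := by
  constructor
  · intro h
    have hz : ∀ z, x < z → u ≤ cdf μ z := by
      intro z hz
      obtain ⟨s, hsS, hs⟩ := exists_lt_of_csInf_lt (Q_nonempty μ hu.2) (lt_of_le_of_lt h hz)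
      exact hsS.trans (monotone_cdf μ hs.le)
    have htend : Tendsto (cdf μ) (nhdsWithin x (Set.Ioi x)) (nhds (cdf μ x)) :=
      ((cdf μ).right_continuous x).mono_left (nhdsWithin_mono x Set.Ioi_subset_Ici_self)
    exact ge_of_tendsto htend (eventually_mem_nhdsWithin.mono fun z hzz => hz z hzz)
  · intro h
    exact csInf_le (Q_bddBelow μ hu.1) h

lemma Q_monotoneOn (μ : Measure ℝ) : MonotoneOn (Q μ) (Set.Ioo (0:ℝ) 1) := by
  intro u hu v hv huv
  exact csInf_le_csInf (Q_bddBelow μ hu.1) (Q_nonempty μ hv.2)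
    (fun x hx => le_trans huv hx)

lemma restrict_Ioc_eq {a b : ℝ} (h0 : 0 ≤ a) (hab : a ≤ b) (h1 : b ≤ 1) :
    (volume.restrict (Set.Ioo (0:ℝ) 1)) (Set.Ioc a b) = ENNReal.ofReal (b - a) := by
  rw [Measure.restrict_apply' measurableSet_Ioo]
  apply le_antisymm
  · exact (measure_mono Set.inter_subset_left).trans_eq (Real.volume_Ioc)
  · rw [← Real.volume_Ioo (a := a) (b := b)]
    refine measure_mono fun u hu => ⟨⟨hu.1, hu.2.le⟩, lt_of_le_of_lt h0 hu.1,
      lt_of_lt_of_le hu.2 h1⟩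

lemma map_Q (μ : Measure ℝ) [IsProbabilityMeasure μ] {G : ℝ → ℝ} (hG : Measurable G)
    (hGe : ∀ᵐ u ∂(volume.restrict (Set.Ioo (0:ℝ) 1)), G u = Q μ u) :
    (volume.restrict (Set.Ioo (0:ℝ) 1)).map G = μ := by
  set P := volume.restrict (Set.Ioo (0:ℝ) 1) with hP
  haveI : IsProbabilityMeasure P := ⟨by simp [hP, Real.volume_Ioo]⟩
  haveI : IsProbabilityMeasure (P.map G) := Measure.isProbabilityMeasure_map hG.aemeasurable
  refine Measure.ext_of_Iic (P.map G) μ fun x => ?_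
  rw [Measure.map_apply hG measurableSet_Iic, ← ofReal_cdf μ x]
  have hae : ∀ᵐ u ∂P, u ∈ Set.Ioo (0:ℝ) 1 ∧ G u = Q μ u :=
    (ae_restrict_mem measurableSet_Ioo).and hGe
  have hcong : G ⁻¹' (Set.Iic x) =ᵐ[P] Set.Ioc (0:ℝ) (cdf μ x) := by
    filter_upwards [hae] with u hu
    simp only [eq_iff_iff]
    show G u ∈ Set.Iic x ↔ u ∈ Set.Ioc (0:ℝ) (cdf μ x)
    simp only [Set.mem_Iic, Set.mem_Ioc]
    rw [hu.2, Q_le_iff μ hu.1]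
    exact ⟨fun h => ⟨hu.1.1, h⟩, fun h => h.2⟩
  rw [measure_congr hcong, restrict_Ioc_eq le_rfl (cdf_nonneg μ x) (cdf_le_one μ x)]
  simp

lemma exists_optimal_coupling (μ ν : Measure ℝ) [IsProbabilityMeasure μ]
    [IsProbabilityMeasure ν] :
    ∃ π : Measure (ℝ × ℝ), IsProbabilityMeasure π ∧
      π.map Prod.fst = μ ∧ π.map Prod.snd = ν ∧
      ∫⁻ p : ℝ × ℝ, ENNReal.ofReal |p.1 - p.2| ∂π
        = ∫⁻ t, ENNReal.ofReal |cdf μ t - cdf ν t| := by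
  set P := volume.restrict (Set.Ioo (0:ℝ) 1) with hP
  haveI : IsProbabilityMeasure P := ⟨by simp [hP, Real.volume_Ioo]⟩
  have hQμ : AEMeasurable (Q μ) P :=
    aemeasurable_restrict_of_monotoneOn measurableSet_Ioo (Q_monotoneOn μ)
  have hQν : AEMeasurable (Q ν) P :=
    aemeasurable_restrict_of_monotoneOn measurableSet_Ioo (Q_monotoneOn ν)
  set Gμ := hQμ.mk _ with hGμdef
  set Gν := hQν.mk _ with hGνdef
  have hGμ : Measurable Gμ := hQμ.measurable_mk
  have hGν : Measurable Gν := hQν.measurable_mk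
  have hGμe : ∀ᵐ u ∂P, Gμ u = Q μ u := hQμ.ae_eq_mk.symm
  have hGνe : ∀ᵐ u ∂P, Gν u = Q ν u := hQν.ae_eq_mk.symm
  have hpair : Measurable (fun u => (Gμ u, Gν u)) := hGμ.prodMk hGν
  refine ⟨P.map (fun u => (Gμ u, Gν u)), Measure.isProbabilityMeasure_map hpair.aemeasurable, ?_, ?_, ?_⟩
  · rw [Measure.map_map measurable_fst hpair]
    exact map_Q μ hGμ hGμe
  · rw [Measure.map_map measurable_snd hpair]
    exact map_Q ν hGν hGνe
  · rw [lintegral_map (by fun_prop) hpair]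
    simp only
    rw [key_swap P Gμ Gν hGμ hGν]
    refine lintegral_congr fun t => ?_
    have hae : ∀ᵐ u ∂P, u ∈ Set.Ioo (0:ℝ) 1 ∧ Gμ u = Q μ u ∧ Gν u = Q ν u :=
      ((ae_restrict_mem measurableSet_Ioo).and (hGμe.and hGνe))
    set a := cdf μ t with ha
    set b := cdf ν t with hb
    have hcong : {u | (Gμ u ≤ t ∧ ¬ Gν u ≤ t) ∨ (Gν u ≤ t ∧ ¬ Gμ u ≤ t)}
        =ᵐ[P] Set.Ioc (min a b) (max a b) := by
      filter_upwards [hae] with u hu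
      simp only [eq_iff_iff]
      show (Gμ u ≤ t ∧ ¬ Gν u ≤ t) ∨ (Gν u ≤ t ∧ ¬ Gμ u ≤ t) ↔ u ∈ Set.Ioc (min a b) (max a b)
      rw [hu.2.1, hu.2.2, Q_le_iff μ hu.1, Q_le_iff ν hu.1, Set.mem_Ioc, lt_iff_not_ge,
        le_min_iff, le_max_iff]
      tauto
    rw [measure_congr hcong,
      restrict_Ioc_eq (le_min (cdf_nonneg μ t) (cdf_nonneg ν t)) (min_le_max)
        (max_le (cdf_le_one μ t) (cdf_le_one ν t)),
      max_sub_min_eq_abs, abs_sub_comm]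

end W1Aux

open W1Aux in
theorem stmt_16' (μ ν : Measure ℝ) [IsProbabilityMeasure μ] [IsProbabilityMeasure ν]
    (hμ : Integrable (fun x => |x|) μ) (hν : Integrable (fun x => |x|) ν) :
    (sInf { r : ℝ | ∃ π : Measure (ℝ × ℝ), IsProbabilityMeasure π ∧
      π.map Prod.fst = μ ∧ π.map Prod.snd = ν ∧
      r = ∫ p : ℝ × ℝ, |p.1 - p.2| ∂π }) = ∫ x : ℝ, |cdf μ x - cdf ν x| := by
  set S := { r : ℝ | ∃ π : Measure (ℝ × ℝ), IsProbabilityMeasure π ∧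
      π.map Prod.fst = μ ∧ π.map Prod.snd = ν ∧
      r = ∫ p : ℝ × ℝ, |p.1 - p.2| ∂π } with hS
  set L := ∫⁻ t, ENNReal.ofReal |cdf μ t - cdf ν t| with hL
  have hmeasF : Measurable fun t : ℝ => |cdf μ t - cdf ν t| :=
    ((monotone_cdf μ).measurable.sub (monotone_cdf ν).measurable).abs
  have hprod1 : (μ.prod ν).map Prod.fst = μ := by
    rw [Measure.map_fst_prod]; simp
  have hprod2 : (μ.prod ν).map Prod.snd = ν := by
    rw [Measure.map_snd_prod]; simp
  have hLne : L ≠ ⊤ :=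
    ne_top_of_le_ne_top
      (coupling_integrable μ ν hμ hν _ hprod1 hprod2).lintegral_lt_top.ne
      (coupling_lb μ ν (μ.prod ν) hprod1 hprod2)
  have hW : ∫ x : ℝ, |cdf μ x - cdf ν x| = L.toReal := by
    rw [integral_eq_lintegral_of_nonneg_ae (Filter.Eventually.of_forall fun x => abs_nonneg _)
      hmeasF.aestronglyMeasurable]
  have hval : ∀ (π : Measure (ℝ × ℝ)), IsProbabilityMeasure π → π.map Prod.fst = μ →
      π.map Prod.snd = ν →
      ∫ p : ℝ × ℝ, |p.1 - p.2| ∂π = (∫⁻ p : ℝ × ℝ, ENNReal.ofReal |p.1 - p.2| ∂π).toReal := by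
    intro π _i h1 h2
    rw [integral_eq_lintegral_of_nonneg_ae (Filter.Eventually.of_forall fun p => abs_nonneg _)
      ((by fun_prop : Continuous fun p : ℝ × ℝ => |p.1 - p.2|).aestronglyMeasurable)]
  have hlb : ∀ r ∈ S, L.toReal ≤ r := by
    rintro r ⟨π, hπ, h1, h2, rfl⟩
    haveI := hπ
    rw [hval π hπ h1 h2]
    exact ENNReal.toReal_mono
      (coupling_integrable μ ν hμ hν π h1 h2).lintegral_lt_top.ne
      (coupling_lb μ ν π h1 h2)
  have hmem : L.toReal ∈ S := by
    obtain ⟨π, hπ, h1, h2, hcost⟩ := exists_optimal_coupling μ ν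
    haveI := hπ
    exact ⟨π, hπ, h1, h2, by rw [hval π hπ h1 h2, hcost]⟩
  rw [hW]
  exact le_antisymm (csInf_le ⟨L.toReal, hlb⟩ hmem) (le_csInf ⟨_, hmem⟩ hlb)


end Aux

theorem stmt_16 (μ ν : Measure ℝ) [IsProbabilityMeasure μ] [IsProbabilityMeasure ν]
    (hμ : Integrable (fun x => |x|) μ) (hν : Integrable (fun x => |x|) ν) :
    W1 μ ν = ∫ x : ℝ, |cdf μ x - cdf ν x| := stmt_16' μ ν hμ hν
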